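/- Let F_c ∈ ℝ, r > 0, let q be holomorphic and nonvanishing on the disc D(F_c, r) ⊂ ℂ, real-valued and strictly positive on D(F_c, r) ∩ ℝ, and for c ∈ ℝ define g_c(F) = c + q(F)(F − F_c)². Then for every ρ ∈ (0, r) there exists c₀ > 0 such that for all real c with |c| ≤ c₀: g_c has exactly two zeros in D(F_c, ρ), counted with multiplicity, and (i) if c < 0 the two zeros are real, simple, and lie on opposite sides of F_c, characterized by q(F)^{1/2}(F − F_c) = ±(−c)^{1/2} for the branch of q^{1/2} positive on the reals; (ii) if c = 0 there is a single double zero at F = F_c; (iii) if c > 0 the two zeros are simple, non-real, and complex conjugates of each other, characterized by q(F)^{1/2}(F − F_c) = ±i c^{1/2}. -/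

import Mathlib

open Metric Set Complex Filter MeasureTheory intervalIntegral

private lemma uIcc_abs_le {a x s : ℝ} (hs : s ∈ Set.uIcc a x) : |s - a| ≤ |x - a| := by
  rcases Set.mem_uIcc.mp hs with ⟨h1, h2⟩ | ⟨h1, h2⟩ <;>
  · have h3 := le_abs_self (x - a)
    have h4 := neg_abs_le (x - a)
    rw [abs_le]
    constructor <;> linarith

private lemma uIcc_abs_le_or {p q s c : ℝ} (hs : s ∈ Set.uIcc p q) :
    |s - c| ≤ |p - c| ∨ |s - c| ≤ |q - c| := by
  rw [← le_max_iff]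
  have h3 := le_abs_self (p - c); have h4 := neg_abs_le (p - c)
  have h5 := le_abs_self (q - c); have h6 := neg_abs_le (q - c)
  have h7 := le_max_left |p - c| |q - c|
  have h8 := le_max_right |p - c| |q - c|
  rcases Set.mem_uIcc.mp hs with ⟨h1, h2⟩ | ⟨h1, h2⟩ <;>
  · rw [abs_le]; constructor <;> linarith

private lemma abs_point_le {z c : ℂ} {s t : ℝ} (hs : |s - c.re| ≤ |z.re - c.re|)
    (ht : |t - c.im| ≤ |z.im - c.im|) :
    ‖(s : ℂ) + (t : ℂ) * Complex.I - c‖ ≤ ‖z - c‖ := by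
  have h0 : 0 ≤ ‖(s : ℂ) + (t : ℂ) * Complex.I - c‖ := norm_nonneg _
  have h0' : 0 ≤ ‖z - c‖ := norm_nonneg _
  have e1 : (s - c.re) ^ 2 ≤ (z.re - c.re) ^ 2 := by
    rw [← _root_.sq_abs (s - c.re), ← _root_.sq_abs (z.re - c.re)]
    exact pow_le_pow_left₀ (abs_nonneg _) hs 2
  have e2 : (t - c.im) ^ 2 ≤ (z.im - c.im) ^ 2 := by
    rw [← _root_.sq_abs (t - c.im), ← _root_.sq_abs (z.im - c.im)]
    exact pow_le_pow_left₀ (abs_nonneg _) ht 2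
  have h1 : ‖(s : ℂ) + (t : ℂ) * Complex.I - c‖ ^ 2 ≤ ‖z - c‖ ^ 2 := by
    rw [Complex.sq_norm, Complex.sq_norm, Complex.normSq_apply, Complex.normSq_apply]
    simp only [Complex.add_re, Complex.add_im, Complex.sub_re, Complex.sub_im,
      Complex.ofReal_re, Complex.ofReal_im, Complex.mul_re, Complex.mul_im,
      Complex.I_re, Complex.I_im, mul_zero, mul_one, zero_mul, zero_add, add_zero, sub_zero]
    nlinarith [e1, e2]
  nlinarith [h1, h0, h0']

private lemma mem_ball_aux {a r : ℝ} {z : ℂ} (hz : z ∈ ball ((a : ℂ)) r)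
    {s t : ℝ} (hs : |s - a| ≤ |z.re - a|) (ht : |t| ≤ |z.im|) :
    ((s : ℂ) + (t : ℂ) * Complex.I) ∈ ball ((a : ℂ)) r := by
  rw [mem_ball, Complex.dist_eq] at hz ⊢
  refine lt_of_le_of_lt (abs_point_le (c := (a : ℂ)) ?_ ?_) hz <;>
    simpa using by assumption

/-- differentiation under the integral for the vertical integral -/
private lemma hasDerivAt_param {U : Set ℂ} (hU : IsOpen U) {h : ℂ → ℂ}
    (hd : DifferentiableOn ℂ h U) (u y : ℝ)
    (hseg : ∀ t ∈ Set.uIcc (0:ℝ) y, ((u : ℂ) + (t : ℂ) * Complex.I) ∈ U) :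
    HasDerivAt (fun v : ℝ => ∫ t in (0:ℝ)..y, h ((v : ℂ) + (t : ℂ) * Complex.I))
      (∫ t in (0:ℝ)..y, deriv h ((u : ℂ) + (t : ℂ) * Complex.I)) u := by
  have hdc : ContinuousOn (deriv h) U := (hd.analyticOnNhd hU).deriv.differentiableOn.continuousOn
  have hc : ContinuousOn h U := hd.continuousOn
  set S : Set ℂ := (fun t : ℝ => (u : ℂ) + (t : ℂ) * Complex.I) '' (Set.uIcc (0:ℝ) y) with hS
  have hScpt : IsCompact S := isCompact_uIcc.image (continuous_const.add (Complex.continuous_ofReal.mul continuous_const))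
  have hSU : S ⊆ U := by rintro _ ⟨t, ht, rfl⟩; exact hseg t ht
  obtain ⟨δ, δpos, hδ⟩ := hScpt.exists_cthickening_subset_open hU hSU
  have hK : IsCompact (cthickening δ S) := hScpt.cthickening
  obtain ⟨M, hM⟩ := hK.exists_bound_of_continuousOn (hdc.mono hδ)
  have hmemK : ∀ v : ℝ, v ∈ ball u δ → ∀ t ∈ Set.uIcc (0:ℝ) y,
      ((v : ℂ) + (t : ℂ) * Complex.I) ∈ cthickening δ S := by
    intro v hv t ht
    refine mem_cthickening_of_dist_le ((v : ℂ) + (t : ℂ) * Complex.I)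
      ((u : ℂ) + (t : ℂ) * Complex.I) δ S (mem_image_of_mem _ ht) ?_
    rw [Complex.dist_eq]
    have he : ((v:ℂ) + (t:ℂ)*Complex.I - ((u:ℂ) + (t:ℂ)*Complex.I)) = ((v - u : ℝ) : ℂ) := by
      push_cast; ring
    rw [he, Complex.norm_real, Real.norm_eq_abs]
    exact le_of_lt (by simpa [Real.dist_eq] using hv)
  have hcont : ∀ v : ℝ, v ∈ ball u δ →
      ContinuousOn (fun t : ℝ => h ((v : ℂ) + (t : ℂ) * Complex.I)) (Set.uIcc (0:ℝ) y) := by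
    intro v hv
    exact hc.comp ((Complex.continuous_ofReal.comp continuous_const).add
      ((Complex.continuous_ofReal).mul continuous_const)).continuousOn
      (fun t ht => hδ (hmemK v hv t ht))
  have hcont' : ContinuousOn (fun t : ℝ => deriv h ((u : ℂ) + (t : ℂ) * Complex.I))
      (Set.uIcc (0:ℝ) y) := by
    exact hdc.comp ((Complex.continuous_ofReal.comp continuous_const).add
      ((Complex.continuous_ofReal).mul continuous_const)).continuousOn
      (fun t ht => hseg t ht)
  have key := intervalIntegral.hasDerivAt_integral_of_dominated_loc_of_deriv_le
    (F := fun (v : ℝ) (t : ℝ) => h ((v : ℂ) + (t : ℂ) * Complex.I))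
    (F' := fun (v : ℝ) (t : ℝ) => deriv h ((v : ℂ) + (t : ℂ) * Complex.I))
    (x₀ := u) (a := (0:ℝ)) (b := y) (μ := volume) (bound := fun _ => M) (s := ball u δ) (ball_mem_nhds u δpos)
    ?_ ?_ ?_ ?_ ?_ ?_
  · exact key.2
  · filter_upwards [ball_mem_nhds u δpos] with v hv
    exact ((hcont v hv).mono Set.uIoc_subset_uIcc).aestronglyMeasurable measurableSet_uIoc
  · exact (hcont u (mem_ball_self δpos)).intervalIntegrable
  · exact (hcont'.mono Set.uIoc_subset_uIcc).aestronglyMeasurable measurableSet_uIoc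
  · refine ae_of_all _ fun t ht v hv => hM _ (hmemK v hv t (Set.uIoc_subset_uIcc ht))
  · exact intervalIntegrable_const
  · refine ae_of_all _ fun t ht v hv => ?_
    have hdiff : HasDerivAt h (deriv h ((v : ℂ) + (t : ℂ) * Complex.I))
        ((v : ℂ) + (t : ℂ) * Complex.I) :=
      (hd.differentiableAt (hU.mem_nhds (hδ (hmemK v hv t (Set.uIoc_subset_uIcc ht))))).hasDerivAt
    have hg : HasDerivAt (fun v : ℝ => ((v : ℂ) + (t : ℂ) * Complex.I)) 1 v := by
      simpa using (hasDerivAt_id v).ofReal_comp.add_const ((t : ℂ) * Complex.I)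
    simpa [smul_eq_mul, Function.comp_def] using hdiff.scomp v hg

private lemma exists_primitive {a r : ℝ} {h : ℂ → ℂ}
    (hd : DifferentiableOn ℂ h (ball ((a : ℂ)) r)) :
    ∃ L : ℂ → ℂ, L ((a : ℂ)) = 0 ∧ ∀ z ∈ ball ((a : ℂ)) r, HasDerivAt L (h z) z := by
  set B := ball ((a : ℂ)) r with hBdef
  have hBo : IsOpen B := isOpen_ball
  have hc : ContinuousOn h B := hd.continuousOn
  have han : AnalyticOnNhd ℂ h B := hd.analyticOnNhd hBo
  have hdc : ContinuousOn (deriv h) B := han.deriv.differentiableOn.continuousOn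
  -- generic integrability
  have hint : ∀ (g : ℂ → ℂ), ContinuousOn g B → ∀ (c₁ c₂ : ℝ) (f : ℝ → ℂ), Continuous f →
      (∀ s ∈ Set.uIcc c₁ c₂, f s ∈ B) →
      IntervalIntegrable (fun s => g (f s)) volume c₁ c₂ := by
    intro g hg c₁ c₂ f hf hsub
    exact (hg.comp hf.continuousOn hsub).intervalIntegrable
  have hcontf : ∀ t : ℝ, Continuous (fun s : ℝ => (s : ℂ) + (t : ℂ) * Complex.I) :=
    fun t => Complex.continuous_ofReal.add continuous_const
  have hcontg : ∀ x : ℝ, Continuous (fun t : ℝ => (x : ℂ) + (t : ℂ) * Complex.I) :=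
    fun x => continuous_const.add (Complex.continuous_ofReal.mul continuous_const)
  -- vertical FTC
  have hvert : ∀ (x y₁ y₂ : ℝ), (∀ t ∈ Set.uIcc y₁ y₂, ((x:ℂ) + (t:ℂ)*Complex.I) ∈ B) →
      (∫ t in y₁..y₂, deriv h ((x:ℂ) + (t:ℂ)*Complex.I))
        = (-Complex.I) * (h ((x:ℂ) + (y₂:ℂ)*Complex.I) - h ((x:ℂ) + (y₁:ℂ)*Complex.I)) := by
    intro x y₁ y₂ hsub
    have key : ∫ t in y₁..y₂, Complex.I * deriv h ((x:ℂ) + (t:ℂ)*Complex.I)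
        = h ((x:ℂ) + (y₂:ℂ)*Complex.I) - h ((x:ℂ) + (y₁:ℂ)*Complex.I) := by
      apply intervalIntegral.integral_eq_sub_of_hasDerivAt
      · intro t ht
        have hdiff : HasDerivAt h (deriv h ((x:ℂ) + (t:ℂ)*Complex.I)) ((x:ℂ) + (t:ℂ)*Complex.I) :=
          (hd.differentiableAt (hBo.mem_nhds (hsub t ht))).hasDerivAt
        have hg : HasDerivAt (fun t : ℝ => ((x:ℂ) + (t:ℂ)*Complex.I)) Complex.I t := by
          simpa using ((hasDerivAt_id t).ofReal_comp.mul_const Complex.I).const_add (x:ℂ)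
        simpa [smul_eq_mul, mul_comm, Function.comp_def] using hdiff.scomp t hg
      · exact (hint (deriv h) hdc y₁ y₂ _ (hcontg x) hsub).const_mul Complex.I
    rw [intervalIntegral.integral_const_mul] at key
    rw [← key]
    linear_combination (∫ t in y₁..y₂, deriv h ((x:ℂ) + (t:ℂ)*Complex.I)) * Complex.I_sq
  -- horizontal FTC
  have hhor : ∀ (t x₁ x₂ : ℝ), (∀ s ∈ Set.uIcc x₁ x₂, ((s:ℂ) + (t:ℂ)*Complex.I) ∈ B) →
      (∫ s in x₁..x₂, deriv h ((s:ℂ) + (t:ℂ)*Complex.I))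
        = h ((x₂:ℂ) + (t:ℂ)*Complex.I) - h ((x₁:ℂ) + (t:ℂ)*Complex.I) := by
    intro t x₁ x₂ hsub
    apply intervalIntegral.integral_eq_sub_of_hasDerivAt
    · intro s hs
      have hdiff : HasDerivAt h (deriv h ((s:ℂ) + (t:ℂ)*Complex.I)) ((s:ℂ) + (t:ℂ)*Complex.I) :=
        (hd.differentiableAt (hBo.mem_nhds (hsub s hs))).hasDerivAt
      have hg : HasDerivAt (fun s : ℝ => ((s:ℂ) + (t:ℂ)*Complex.I)) 1 s := by
        simpa using (hasDerivAt_id s).ofReal_comp.add_const ((t:ℂ)*Complex.I)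
      simpa [smul_eq_mul, Function.comp_def] using hdiff.scomp s hg
    · exact hint (deriv h) hdc x₁ x₂ _ (hcontf t) hsub
  -- the primitive
  set F : ℂ → ℂ := fun z => (∫ s in a..z.re, h ((s:ℂ)))
      + Complex.I * ∫ t in (0:ℝ)..z.im, h ((z.re:ℂ) + (t:ℂ)*Complex.I) with hFdef
  -- rectangle identity
  have hR : ∀ z ∈ B, F z
      = Complex.I * (∫ t in (0:ℝ)..z.im, h ((a:ℂ) + (t:ℂ)*Complex.I))
        + ∫ s in a..z.re, h ((s:ℂ) + (z.im:ℂ)*Complex.I) := by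
    intro z hz
    have hseg : ∀ u ∈ Set.uIcc a z.re, ∀ t ∈ Set.uIcc (0:ℝ) z.im,
        ((u:ℂ) + (t:ℂ)*Complex.I) ∈ B := by
      intro u hu t ht
      refine mem_ball_aux hz ?_ ?_
      · simpa using uIcc_abs_le hu
      · simpa using uIcc_abs_le ht
    have hsegB : ∀ u ∈ Set.uIcc a z.re, ((u:ℂ)) ∈ B := by
      intro u hu
      have := hseg u hu 0 (Set.left_mem_uIcc)
      simpa using this
    set Ψ : ℝ → ℂ := fun u => Complex.I * (∫ t in (0:ℝ)..z.im, h ((u:ℂ) + (t:ℂ)*Complex.I))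
        + ((∫ s in a..u, h ((s:ℂ))) - ∫ s in a..u, h ((s:ℂ) + (z.im:ℂ)*Complex.I)) with hΨdef
    have hΨd : ∀ u ∈ Set.uIcc a z.re, HasDerivAt Ψ 0 u := by
      intro u hu
      have h1 := hasDerivAt_param hBo hd u z.im (hseg u hu)
      have hOopen : IsOpen {v : ℝ | ((v:ℂ)) ∈ B} := hBo.preimage Complex.continuous_ofReal
      have hO'open : IsOpen {v : ℝ | ((v:ℂ) + (z.im:ℂ)*Complex.I) ∈ B} :=
        hBo.preimage (hcontf z.im)
      have huO : u ∈ {v : ℝ | ((v:ℂ)) ∈ B} := hsegB u hu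
      have huO' : u ∈ {v : ℝ | ((v:ℂ) + (z.im:ℂ)*Complex.I) ∈ B} :=
        hseg u hu z.im (Set.right_mem_uIcc)
      have hcO : ContinuousOn (fun s : ℝ => h ((s:ℂ))) {v : ℝ | ((v:ℂ)) ∈ B} :=
        hc.comp Complex.continuous_ofReal.continuousOn (fun v hv => hv)
      have hcO' : ContinuousOn (fun s : ℝ => h ((s:ℂ) + (z.im:ℂ)*Complex.I))
          {v : ℝ | ((v:ℂ) + (z.im:ℂ)*Complex.I) ∈ B} :=
        hc.comp (hcontf z.im).continuousOn (fun v hv => hv)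
      have h2 : HasDerivAt (fun u : ℝ => ∫ s in a..u, h ((s:ℂ))) (h ((u:ℂ))) u := by
        refine intervalIntegral.integral_hasDerivAt_right
          (hint h hc a u _ Complex.continuous_ofReal
            (fun s hs => hsegB s (Set.uIcc_subset_uIcc Set.left_mem_uIcc hu hs)))
          (hcO.stronglyMeasurableAtFilter hOopen u huO) (hcO.continuousAt (hOopen.mem_nhds huO))
      have h3 : HasDerivAt (fun u : ℝ => ∫ s in a..u, h ((s:ℂ) + (z.im:ℂ)*Complex.I))
          (h ((u:ℂ) + (z.im:ℂ)*Complex.I)) u := by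
        refine intervalIntegral.integral_hasDerivAt_right
          (hint h hc a u _ (hcontf z.im)
            (fun s hs => hseg s (Set.uIcc_subset_uIcc Set.left_mem_uIcc hu hs) z.im
              Set.right_mem_uIcc))
          (hcO'.stronglyMeasurableAtFilter hO'open u huO') (hcO'.continuousAt (hO'open.mem_nhds huO'))
      have h4 := (h1.const_mul Complex.I).add (h2.sub h3)
      have h5 : Complex.I * (∫ t in (0:ℝ)..z.im, deriv h ((u:ℂ) + (t:ℂ)*Complex.I))
          + (h ((u:ℂ)) - h ((u:ℂ) + (z.im:ℂ)*Complex.I)) = 0 := by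
        rw [hvert u 0 z.im (hseg u hu)]
        have e0 : ((0:ℝ):ℂ) = 0 := by norm_num
        rw [e0, zero_mul, add_zero]
        linear_combination (h ((u:ℂ)) - h ((u:ℂ) + (z.im:ℂ)*Complex.I)) * Complex.I_sq
      rw [h5] at h4
      exact h4
    have h6 : Ψ z.re = Ψ a := by
      have h7 := intervalIntegral.integral_eq_sub_of_hasDerivAt (f := Ψ)
        (f' := fun _ => (0:ℂ)) (a := a) (b := z.re) hΨd intervalIntegrable_const
      simp only [intervalIntegral.integral_const, smul_zero] at h7
      linear_combination -h7
    simp only [hΨdef, intervalIntegral.integral_same] at h6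
    simp only [hFdef]
    linear_combination h6
  -- conclusion: HasDerivAt F (h z) z for z ∈ B
  refine ⟨F, ?_, ?_⟩
  · simp [hFdef]
  intro z hz
  obtain ⟨ε₀, hε₀, hball⟩ := Metric.isOpen_iff.mp hBo z hz
  set δ : ℝ := ε₀ / 2 with hδdef
  have hδpos : 0 < δ := by positivity
  have hδsub : closedBall z δ ⊆ B := fun w hw =>
    hball (lt_of_le_of_lt hw (half_lt_self hε₀))
  -- difference formula
  have hdiffF : ∀ w ∈ closedBall z δ,
      F w - F z = Complex.I * (∫ t in z.im..w.im, h ((z.re:ℂ) + (t:ℂ)*Complex.I))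
        + ∫ s in z.re..w.re, h ((s:ℂ) + (w.im:ℂ)*Complex.I) := by
    intro w hw
    have hwB : w ∈ B := hδsub hw
    set zc : ℂ := (z.re:ℂ) + (w.im:ℂ)*Complex.I with hzc
    have hzcre : zc.re = z.re := by simp [hzc]
    have hzcim : zc.im = w.im := by simp [hzc]
    have hzcd : dist zc z ≤ dist w z := by
      rw [Complex.dist_eq, Complex.dist_eq]
      exact abs_point_le (by simp) (by simp [hzc])
    have hzcB : zc ∈ B := hδsub (mem_closedBall.mpr (le_trans hzcd hw))
    -- integrabilities
    have hi1 : IntervalIntegrable (fun s : ℝ => h ((s:ℂ) + (w.im:ℂ)*Complex.I)) volume a z.re := by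
      refine hint h hc a z.re _ (hcontf w.im) ?_
      intro s hs
      refine mem_ball_aux hzcB ?_ ?_
      · simpa [hzcre] using uIcc_abs_le hs
      · simp [hzcim]
    have hi2 : IntervalIntegrable (fun s : ℝ => h ((s:ℂ) + (w.im:ℂ)*Complex.I)) volume z.re w.re := by
      refine hint h hc z.re w.re _ (hcontf w.im) ?_
      intro s hs
      rcases uIcc_abs_le_or (c := a) hs with hle | hle
      · exact mem_ball_aux hzcB (by simpa [hzcre] using hle) (by simp [hzcim])
      · exact mem_ball_aux hwB hle (by simp)
    have hi3 : IntervalIntegrable (fun t : ℝ => h ((z.re:ℂ) + (t:ℂ)*Complex.I)) volume 0 z.im := by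
      refine hint h hc 0 z.im _ (hcontg z.re) ?_
      intro t ht
      exact mem_ball_aux hz (by simp) (by simpa using uIcc_abs_le ht)
    have hi4 : IntervalIntegrable (fun t : ℝ => h ((z.re:ℂ) + (t:ℂ)*Complex.I)) volume z.im w.im := by
      refine hint h hc z.im w.im _ (hcontg z.re) ?_
      intro t ht
      rcases uIcc_abs_le_or (c := (0:ℝ)) ht with hle | hle
      · exact mem_ball_aux hz (by simp) (by simpa using hle)
      · exact mem_ball_aux hzcB (by simp [hzcre]) (by simpa [hzcim] using hle)
    -- F w - F zc
    have e1 : F w - F zc = ∫ s in z.re..w.re, h ((s:ℂ) + (w.im:ℂ)*Complex.I) := by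
      rw [hR w hwB, hR zc hzcB]
      rw [hzcre, hzcim]
      have hadd := intervalIntegral.integral_add_adjacent_intervals hi1 hi2
      linear_combination -hadd
    -- F zc - F z
    have e2 : F zc - F z = Complex.I * ∫ t in z.im..w.im, h ((z.re:ℂ) + (t:ℂ)*Complex.I) := by
      simp only [hFdef, hzcre, hzcim]
      have hadd := intervalIntegral.integral_add_adjacent_intervals hi3 hi4
      linear_combination Complex.I * (-hadd)
    linear_combination e1 + e2
  -- the derivative estimate
  have hczb : ContinuousAt h z := hc.continuousAt (hBo.mem_nhds hz)
  rw [hasDerivAt_iff_isLittleO, Asymptotics.isLittleO_iff]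
  intro ε' hε'
  have hε2 : 0 < ε' / 2 := by positivity
  obtain ⟨δ₂, hδ₂, hδ₂p⟩ := Metric.continuousAt_iff.mp hczb (ε'/2) hε2
  set δ₃ : ℝ := min δ (δ₂/2) with hδ₃def
  have hδ₃pos : 0 < δ₃ := lt_min hδpos (by positivity)
  filter_upwards [Metric.closedBall_mem_nhds z hδ₃pos] with w hw
  have hwδ : w ∈ closedBall z δ := mem_closedBall.mpr (le_trans hw (min_le_left _ _))
  have hwz : dist w z ≤ δ₃ := hw
  have hwB : w ∈ B := hδsub hwδ
  rw [hdiffF w hwδ]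
  -- rewrite (w - z) • h z
  have hsegv : ∀ t ∈ Set.uIcc z.im w.im, ((z.re:ℂ) + (t:ℂ)*Complex.I) ∈ closedBall z δ₃ := by
    intro t ht
    rw [mem_closedBall, Complex.dist_eq]
    refine le_trans (abs_point_le (z := w) (by simp) (uIcc_abs_le ht)) ?_
    rw [← Complex.dist_eq]; exact hw
  have hsegh : ∀ s ∈ Set.uIcc z.re w.re, ((s:ℂ) + (w.im:ℂ)*Complex.I) ∈ closedBall z δ₃ := by
    intro s hs
    rw [mem_closedBall, Complex.dist_eq]
    refine le_trans (abs_point_le (z := w) (uIcc_abs_le hs) (by simp)) ?_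
    rw [← Complex.dist_eq]; exact hw
  have hδ₃δ : closedBall z δ₃ ⊆ closedBall z δ :=
    closedBall_subset_closedBall (min_le_left _ _)
  have hi4' : IntervalIntegrable (fun t : ℝ => h ((z.re:ℂ) + (t:ℂ)*Complex.I)) volume z.im w.im :=
    hint h hc z.im w.im _ (hcontg z.re) (fun t ht => hδsub (hδ₃δ (hsegv t ht)))
  have hi2' : IntervalIntegrable (fun s : ℝ => h ((s:ℂ) + (w.im:ℂ)*Complex.I)) volume z.re w.re :=
    hint h hc z.re w.re _ (hcontf w.im) (fun s hs => hδsub (hδ₃δ (hsegh s hs)))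
  -- the constant integral
  have hconst : (w - z) • h z
      = Complex.I * (∫ _t in z.im..w.im, h z) + ∫ _s in z.re..w.re, h z := by
    rw [intervalIntegral.integral_const, intervalIntegral.integral_const]
    have hwz' : w - z = ((w.re - z.re : ℝ) : ℂ) + ((w.im - z.im : ℝ) : ℂ) * Complex.I := by
      simp [Complex.ext_iff]
    simp only [smul_eq_mul, Complex.real_smul]
    rw [hwz']
    push_cast
    ring
  rw [hconst]
  have hsub1 : Complex.I * (∫ t in z.im..w.im, h ((z.re:ℂ) + (t:ℂ)*Complex.I))
      + (∫ s in z.re..w.re, h ((s:ℂ) + (w.im:ℂ)*Complex.I))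
      - (Complex.I * (∫ _t in z.im..w.im, h z) + ∫ _s in z.re..w.re, h z)
      = Complex.I * (∫ t in z.im..w.im, (h ((z.re:ℂ) + (t:ℂ)*Complex.I) - h z))
        + ∫ s in z.re..w.re, (h ((s:ℂ) + (w.im:ℂ)*Complex.I) - h z) := by
    rw [intervalIntegral.integral_sub hi4' intervalIntegrable_const,
      intervalIntegral.integral_sub hi2' intervalIntegrable_const]
    ring
  rw [hsub1]
  -- estimates
  have hest1 : ‖∫ t in z.im..w.im, (h ((z.re:ℂ) + (t:ℂ)*Complex.I) - h z)‖
      ≤ (ε'/2) * |w.im - z.im| := by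
    refine intervalIntegral.norm_integral_le_of_norm_le_const ?_
    intro t ht
    have htm := hsegv t (Set.uIoc_subset_uIcc ht)
    have hd2 : dist ((z.re:ℂ) + (t:ℂ)*Complex.I) z < δ₂ := by
      refine lt_of_le_of_lt (mem_closedBall.mp htm) (lt_of_le_of_lt (min_le_right _ _) ?_)
      linarith
    have := hδ₂p hd2
    rw [Complex.dist_eq] at this
    have : ‖h ((z.re:ℂ) + (t:ℂ)*Complex.I) - h z‖ < ε'/2 := by
      simpa [Complex.dist_eq] using this
    exact le_of_lt this
  have hest2 : ‖∫ s in z.re..w.re, (h ((s:ℂ) + (w.im:ℂ)*Complex.I) - h z)‖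
      ≤ (ε'/2) * |w.re - z.re| := by
    refine intervalIntegral.norm_integral_le_of_norm_le_const ?_
    intro s hs
    have hsm := hsegh s (Set.uIoc_subset_uIcc hs)
    have hd2 : dist ((s:ℂ) + (w.im:ℂ)*Complex.I) z < δ₂ := by
      refine lt_of_le_of_lt (mem_closedBall.mp hsm) (lt_of_le_of_lt (min_le_right _ _) ?_)
      linarith
    have := hδ₂p hd2
    have : ‖h ((s:ℂ) + (w.im:ℂ)*Complex.I) - h z‖ < ε'/2 := by
      simpa [Complex.dist_eq] using this
    exact le_of_lt this
  have him : |w.im - z.im| ≤ ‖w - z‖ := by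
    simpa [Complex.sub_im] using Complex.abs_im_le_norm (w - z)
  have hre : |w.re - z.re| ≤ ‖w - z‖ := by
    simpa [Complex.sub_re] using Complex.abs_re_le_norm (w - z)
  calc ‖Complex.I * (∫ t in z.im..w.im, (h ((z.re:ℂ) + (t:ℂ)*Complex.I) - h z))
        + ∫ s in z.re..w.re, (h ((s:ℂ) + (w.im:ℂ)*Complex.I) - h z)‖
      ≤ ‖Complex.I * (∫ t in z.im..w.im, (h ((z.re:ℂ) + (t:ℂ)*Complex.I) - h z))‖
        + ‖∫ s in z.re..w.re, (h ((s:ℂ) + (w.im:ℂ)*Complex.I) - h z)‖ := norm_add_le _ _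
    _ = ‖∫ t in z.im..w.im, (h ((z.re:ℂ) + (t:ℂ)*Complex.I) - h z)‖
        + ‖∫ s in z.re..w.re, (h ((s:ℂ) + (w.im:ℂ)*Complex.I) - h z)‖ := by
        rw [norm_mul, Complex.norm_I, one_mul]
    _ ≤ (ε'/2) * |w.im - z.im| + (ε'/2) * |w.re - z.re| := add_le_add hest1 hest2
    _ ≤ (ε'/2) * ‖w - z‖ + (ε'/2) * ‖w - z‖ := by
        have h2 : (0:ℝ) ≤ ε'/2 := le_of_lt hε2
        exact add_le_add (mul_le_mul_of_nonneg_left him h2) (mul_le_mul_of_nonneg_left hre h2)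
    _ = ε' * ‖w - z‖ := by ring

private lemma exists_sqrt_pos {a r : ℝ} {q : ℂ → ℂ} (hr : 0 < r)
    (hq : DifferentiableOn ℂ q (ball ((a : ℂ)) r))
    (hqne : ∀ z ∈ ball ((a : ℂ)) r, q z ≠ 0)
    (hqreal : ∀ x : ℝ, (x : ℂ) ∈ ball ((a : ℂ)) r → (q (x : ℂ)).im = 0 ∧ 0 < (q (x : ℂ)).re) :
    ∃ s : ℂ → ℂ, DifferentiableOn ℂ s (ball ((a : ℂ)) r) ∧
      (∀ z ∈ ball ((a : ℂ)) r, (s z) ^ 2 = q z) ∧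
      (∀ x : ℝ, (x : ℂ) ∈ ball ((a : ℂ)) r → (s (x : ℂ)).im = 0 ∧ 0 < (s (x : ℂ)).re) := by
  set B := ball ((a : ℂ)) r with hBdef
  have hBo : IsOpen B := isOpen_ball
  have hra : (a : ℂ) ∈ B := by simp [hBdef, hr]
  have hconv : Convex ℝ B := convex_ball _ _
  have hdq : DifferentiableOn ℂ (deriv q) B := (hq.analyticOnNhd hBo).deriv.differentiableOn
  have hgd : DifferentiableOn ℂ (fun z => deriv q z / q z) B := hdq.div hq hqne
  obtain ⟨L, hL0, hLd⟩ := exists_primitive hgd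
  set φ : ℂ → ℂ := fun z => q z * Complex.exp (-L z) with hφdef
  have hφd : ∀ z ∈ B, HasDerivAt φ 0 z := by
    intro z hz
    have h1 : HasDerivAt q (deriv q z) z := (hq.differentiableAt (hBo.mem_nhds hz)).hasDerivAt
    have h2 : HasDerivAt (fun z => -L z) (-(deriv q z / q z)) z := (hLd z hz).neg
    have h3 : HasDerivAt (fun z => Complex.exp (-L z))
        (Complex.exp (-L z) * (-(deriv q z / q z))) z := h2.cexp
    have h4 := h1.mul h3
    have h5 : deriv q z * Complex.exp (-L z) + q z * (Complex.exp (-L z) * -(deriv q z / q z)) = 0 := by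
      rw [div_eq_mul_inv]
      linear_combination (-(deriv q z * Complex.exp (-L z))) * mul_inv_cancel₀ (hqne z hz)
    rw [h5] at h4
    exact h4
  have hφdiff : DifferentiableOn ℂ φ B :=
    fun z hz => ((hφd z hz).differentiableAt).differentiableWithinAt
  have hφconst : ∀ z ∈ B, φ z = φ ((a : ℂ)) := by
    intro z hz
    refine hconv.is_const_of_fderivWithin_eq_zero hφdiff ?_ hz hra
    intro x hx
    rw [fderivWithin_eq_fderiv (hBo.uniqueDiffWithinAt hx) (hφd x hx).differentiableAt,
      ((hφd x hx).hasFDerivAt).fderiv]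
    ext v
    simp
  have hqL : ∀ z ∈ B, q z = q ((a : ℂ)) * Complex.exp (L z) := by
    intro z hz
    have h5 := hφconst z hz
    simp only [hφdef, hL0, neg_zero, Complex.exp_zero, mul_one] at h5
    have h6 := Complex.exp_ne_zero (L z)
    field_simp [Complex.exp_neg] at h5
    rw [← h5, mul_assoc, ← Complex.exp_add, neg_add_cancel, Complex.exp_zero, mul_one]
  set e : ℂ := Complex.log (q ((a : ℂ))) with hedef
  have hqa : Complex.exp e = q ((a : ℂ)) := Complex.exp_log (hqne _ hra)
  set s0 : ℂ → ℂ := fun z => Complex.exp ((e + L z) / 2) with hs0def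
  have hs0d : DifferentiableOn ℂ s0 B := by
    refine DifferentiableOn.cexp ?_
    refine DifferentiableOn.div_const ?_ 2
    exact (differentiableOn_const e).add
      (fun z hz => ((hLd z hz).differentiableAt).differentiableWithinAt)
  have hs0sq : ∀ z ∈ B, (s0 z) ^ 2 = q z := by
    intro z hz
    rw [hqL z hz, ← hqa, hs0def]
    rw [pow_two, ← Complex.exp_add, ← Complex.exp_add]
    ring_nf
  -- adjust sign
  have hre_ne : ∀ (s' : ℂ → ℂ), (∀ z ∈ B, (s' z) ^ 2 = q z) →
      ∀ x : ℝ, (x : ℂ) ∈ B → (s' ((x : ℂ))).re ≠ 0 := by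
    intro s' hs' x hx hre0
    have hsq := hs' _ hx
    have h7 : ((s' ((x : ℂ))) ^ 2).re ≤ 0 := by
      rw [pow_two, Complex.mul_re, hre0]
      nlinarith [sq_nonneg (s' ((x : ℂ))).im]
    rw [hsq] at h7
    linarith [(hqreal x hx).2]
  obtain ⟨s1, hs1d, hs1sq, hs1a⟩ :
      ∃ s1 : ℂ → ℂ, DifferentiableOn ℂ s1 B ∧ (∀ z ∈ B, (s1 z) ^ 2 = q z) ∧
        0 < (s1 ((a : ℂ))).re := by
    rcases lt_or_gt_of_ne (hre_ne s0 hs0sq a hra) with hneg | hpos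
    · exact ⟨fun z => -(s0 z), hs0d.neg, fun z hz => by rw [neg_pow]; simp [hs0sq z hz],
        by simpa using hneg⟩
    · exact ⟨s0, hs0d, hs0sq, hpos⟩
  have hT : ∀ x : ℝ, (x : ℂ) ∈ B ↔ |x - a| < r := by
    intro x
    rw [hBdef, mem_ball, Complex.dist_eq]
    constructor <;> intro h' <;> simpa [← Complex.ofReal_sub, Complex.norm_real] using h'
  have hs1cont : ContinuousOn (fun x : ℝ => (s1 ((x : ℂ))).re) {x : ℝ | (x : ℂ) ∈ B} :=
    Complex.continuous_re.comp_continuousOn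
      ((hs1d.continuousOn).comp Complex.continuous_ofReal.continuousOn (fun x hx => hx))
  have hpos : ∀ x : ℝ, (x : ℂ) ∈ B → 0 < (s1 ((x : ℂ))).re := by
    intro x hx
    by_contra hle
    push_neg at hle
    have hlt : (s1 ((x : ℂ))).re < 0 := lt_of_le_of_ne hle (hre_ne s1 hs1sq x hx)
    have hsubT : Set.uIcc x a ⊆ {x : ℝ | (x : ℂ) ∈ B} := by
      intro u hu
      have h8 : |u - a| ≤ |x - a| := uIcc_abs_le (by rwa [Set.uIcc_comm] at hu)
      exact (hT u).mpr (lt_of_le_of_lt h8 ((hT x).mp hx))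
    have hivt := intermediate_value_uIcc (hs1cont.mono hsubT)
    have h0mem : (0:ℝ) ∈ Set.uIcc ((s1 ((x : ℂ))).re) ((s1 ((a : ℂ))).re) := by
      rw [Set.mem_uIcc]
      left; exact ⟨le_of_lt hlt, le_of_lt hs1a⟩
    obtain ⟨u, hu, hu0⟩ := hivt h0mem
    exact hre_ne s1 hs1sq u (hsubT hu) hu0
  refine ⟨s1, hs1d, hs1sq, fun x hx => ?_⟩
  have hsq := hs1sq _ hx
  have him : ((s1 ((x : ℂ))) ^ 2).im = 0 := by rw [hsq]; exact (hqreal x hx).1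
  rw [pow_two, Complex.mul_im] at him
  have hre := hpos x hx
  constructor
  · nlinarith [him, hre]
  · exact hre

private lemma reflection_eq {a r : ℝ} {q : ℂ → ℂ} (hr : 0 < r)
    (hq : DifferentiableOn ℂ q (ball ((a : ℂ)) r))
    (hqreal : ∀ x : ℝ, (x : ℂ) ∈ ball ((a : ℂ)) r → (q ((x : ℂ))).im = 0) :
    ∀ z ∈ ball ((a : ℂ)) r, q ((starRingEnd ℂ) z) = (starRingEnd ℂ) (q z) := by
  set B := ball ((a : ℂ)) r with hBdef
  have hBo : IsOpen B := isOpen_ball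
  have hra : (a : ℂ) ∈ B := by simp [hBdef, hr]
  have hconjB : ∀ z ∈ B, (starRingEnd ℂ) z ∈ B := by
    intro z hz
    rw [hBdef, mem_ball, Complex.dist_eq] at hz ⊢
    have he : (starRingEnd ℂ) z - (a : ℂ) = (starRingEnd ℂ) (z - (a : ℂ)) := by
      rw [map_sub, Complex.conj_ofReal]
    rw [he, Complex.norm_conj]
    exact hz
  set qt : ℂ → ℂ := fun z => (starRingEnd ℂ) (q ((starRingEnd ℂ) z)) with hqtdef
  have hqtd : DifferentiableOn ℂ qt B := by
    intro z hz
    have hdq : HasDerivAt q (deriv q ((starRingEnd ℂ) z)) ((starRingEnd ℂ) z) :=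
      (hq.differentiableAt (hBo.mem_nhds (hconjB z hz))).hasDerivAt
    have h1 := hasDerivAt_iff_tendsto.mp hdq
    have h2 : Filter.Tendsto (fun x : ℂ => (starRingEnd ℂ) x) (nhds z)
        (nhds ((starRingEnd ℂ) z)) := (Complex.continuous_conj).tendsto z
    have h3 := h1.comp h2
    have h4 : HasDerivAt qt ((starRingEnd ℂ) (deriv q ((starRingEnd ℂ) z))) z := by
      rw [hasDerivAt_iff_tendsto]
      refine h3.congr (fun x => ?_)
      simp only [Function.comp_apply]
      have e1 : ‖(starRingEnd ℂ) x - (starRingEnd ℂ) z‖ = ‖x - z‖ := by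
        rw [← map_sub, Complex.norm_conj]
      have e2 : q ((starRingEnd ℂ) x) - q ((starRingEnd ℂ) z)
          - ((starRingEnd ℂ) x - (starRingEnd ℂ) z) • deriv q ((starRingEnd ℂ) z)
          = (starRingEnd ℂ) (qt x - qt z
            - (x - z) • ((starRingEnd ℂ) (deriv q ((starRingEnd ℂ) z)))) := by
        simp only [hqtdef, map_sub, map_mul, smul_eq_mul, Complex.conj_conj]
      rw [e1, e2]
      congr 1
      rw [Complex.norm_conj]
    exact h4.differentiableAt.differentiableWithinAt
  have heq : Set.EqOn q qt B := by
    refine AnalyticOnNhd.eqOn_of_preconnected_of_frequently_eq (hq.analyticOnNhd hBo)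
      (hqtd.analyticOnNhd hBo) ((convex_ball _ _).isPreconnected) hra ?_
    have h0' := (tendsto_const_div_atTop_nhds_zero_nat r).comp (Filter.tendsto_add_atTop_nat 2)
    have h0 : Filter.Tendsto (fun n : ℕ => r / ((n : ℝ) + 2)) Filter.atTop (nhds 0) := by
      have : (fun n : ℕ => r / ((n : ℝ) + 2)) = (fun n : ℕ => r / ((n + 2 : ℕ) : ℝ)) := by
        funext n; push_cast; ring_nf
      rw [this]; exact h0'
    have hseq : Filter.Tendsto (fun n : ℕ => ((a + r / ((n : ℝ) + 2) : ℝ) : ℂ)) Filter.atTop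
        (nhdsWithin ((a : ℂ)) {((a : ℂ))}ᶜ) := by
      rw [tendsto_nhdsWithin_iff]
      constructor
      · have hto : Filter.Tendsto (fun n : ℕ => a + r / ((n : ℝ) + 2)) Filter.atTop (nhds a) := by
          simpa using tendsto_const_nhds.add h0
        exact (Complex.continuous_ofReal.tendsto a).comp hto
      · refine Filter.Eventually.of_forall (fun n => ?_)
        simp only [Set.mem_compl_iff, Set.mem_singleton_iff]
        intro hcontra
        rw [Complex.ofReal_inj] at hcontra
        have hpos : 0 < r / ((n : ℝ) + 2) := by positivity
        linarith [hcontra]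
    refine hseq.frequently (Filter.Frequently.of_forall (fun n => ?_))
    have hlt : r / ((n : ℝ) + 2) < r := by
      rw [div_lt_iff₀ (by positivity)]
      nlinarith [Nat.cast_nonneg (α := ℝ) n]
    have hxB : ((a + r / ((n : ℝ) + 2) : ℝ) : ℂ) ∈ B := by
      rw [hBdef, mem_ball, Complex.dist_eq]
      have he : ((a + r / ((n : ℝ) + 2) : ℝ) : ℂ) - (a : ℂ) = ((r / ((n : ℝ) + 2) : ℝ) : ℂ) := by
        push_cast; ring
      rw [he, Complex.norm_real, Real.norm_eq_abs, abs_of_pos (by positivity)]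
      exact hlt
    show q _ = qt _
    rw [hqtdef]
    simp only [Complex.conj_ofReal]
    exact (Complex.conj_eq_iff_im.mpr (hqreal _ hxB)).symm
  intro z hz
  have h5 := heq (hconjB z hz)
  have h6 : qt ((starRingEnd ℂ) z) = (starRingEnd ℂ) (q z) := by
    simp only [hqtdef, Complex.conj_conj]
  rw [h5, h6]

/-- the PT-symmetry-breaking trichotomy for
`g_c(F) = c + q(F)(F − F_c)²` with `q` holomorphic, nonvanishing, real and
positive on the reals near `F_c`. For each `ρ ∈ (0,r)` there is `c₀ > 0` such
that for all real `c` with `|c| ≤ c₀`: if `c < 0` the zeros of `g_c` in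
`D(F_c,ρ)` are two simple real zeros on opposite sides of `F_c`, characterized by
`q^{1/2}(F)(F − F_c) = ±√(−c)`; if `c = 0` there is the single double zero
`F = F_c`; if `c > 0` the zeros are two simple complex-conjugate non-real zeros,
characterized by `q^{1/2}(F)(F − F_c) = ±i√c`. Here `q^{1/2} = s` is the branch
positive on the reals. -/
theorem stmt_18 (Fc r : ℝ) (hr : 0 < r) (q : ℂ → ℂ)
    (hq : DifferentiableOn ℂ q (Metric.ball (Fc:ℂ) r))
    (hqne : ∀ z ∈ Metric.ball (Fc:ℂ) r, q z ≠ 0)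
    (hqreal : ∀ x : ℝ, (x:ℂ) ∈ Metric.ball (Fc:ℂ) r →
      (q (x:ℂ)).im = 0 ∧ 0 < (q (x:ℂ)).re) :
    ∀ ρ : ℝ, 0 < ρ → ρ < r →
      ∃ c₀ > (0:ℝ), ∃ s : ℂ → ℂ,
        DifferentiableOn ℂ s (Metric.ball (Fc:ℂ) r) ∧
        (∀ z ∈ Metric.ball (Fc:ℂ) r, (s z)^2 = q z) ∧
        (∀ x : ℝ, (x:ℂ) ∈ Metric.ball (Fc:ℂ) r →
          (s (x:ℂ)).im = 0 ∧ 0 < (s (x:ℂ)).re) ∧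
        ∀ c : ℝ, |c| ≤ c₀ →
          (c < 0 → ∃ F₁ F₂ : ℝ, F₁ < Fc ∧ Fc < F₂ ∧
            (F₁:ℂ) ∈ Metric.ball (Fc:ℂ) ρ ∧ (F₂:ℂ) ∈ Metric.ball (Fc:ℂ) ρ ∧
            (∀ z ∈ Metric.ball (Fc:ℂ) ρ,
              ((c:ℂ) + q z * (z - (Fc:ℂ))^2 = 0 ↔ z = (F₁:ℂ) ∨ z = (F₂:ℂ))) ∧
            deriv (fun z => (c:ℂ) + q z * (z - (Fc:ℂ))^2) (F₁:ℂ) ≠ 0 ∧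
            deriv (fun z => (c:ℂ) + q z * (z - (Fc:ℂ))^2) (F₂:ℂ) ≠ 0 ∧
            (∀ z ∈ Metric.ball (Fc:ℂ) ρ, (c:ℂ) + q z * (z - (Fc:ℂ))^2 = 0 →
              s z * (z - (Fc:ℂ)) = (Real.sqrt (-c) : ℝ) ∨
              s z * (z - (Fc:ℂ)) = -((Real.sqrt (-c) : ℝ) : ℂ))) ∧
          (c = 0 → (∀ z ∈ Metric.ball (Fc:ℂ) ρ,
              ((c:ℂ) + q z * (z - (Fc:ℂ))^2 = 0 ↔ z = (Fc:ℂ))) ∧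
            deriv (fun z => (c:ℂ) + q z * (z - (Fc:ℂ))^2) (Fc:ℂ) = 0 ∧
            deriv (deriv (fun z => (c:ℂ) + q z * (z - (Fc:ℂ))^2)) (Fc:ℂ) ≠ 0) ∧
          (0 < c → ∃ z₀ : ℂ, z₀ ∈ Metric.ball (Fc:ℂ) ρ ∧ z₀.im ≠ 0 ∧
            (∀ z ∈ Metric.ball (Fc:ℂ) ρ,
              ((c:ℂ) + q z * (z - (Fc:ℂ))^2 = 0 ↔
                z = z₀ ∨ z = (starRingEnd ℂ) z₀)) ∧
            deriv (fun z => (c:ℂ) + q z * (z - (Fc:ℂ))^2) z₀ ≠ 0 ∧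
            deriv (fun z => (c:ℂ) + q z * (z - (Fc:ℂ))^2) ((starRingEnd ℂ) z₀) ≠ 0 ∧
            (∀ z ∈ Metric.ball (Fc:ℂ) ρ, (c:ℂ) + q z * (z - (Fc:ℂ))^2 = 0 →
              s z * (z - (Fc:ℂ)) = Complex.I * ((Real.sqrt c : ℝ) : ℂ) ∨
              s z * (z - (Fc:ℂ)) = -(Complex.I * ((Real.sqrt c : ℝ) : ℂ)))) := by
  intro ρ hρ hρr
  set B := Metric.ball ((Fc : ℂ)) r with hBdef
  have hBo : IsOpen B := isOpen_ball
  have hFcB : ((Fc : ℂ)) ∈ B := by simp [hBdef, hr]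
  have hρB : Metric.ball ((Fc : ℂ)) ρ ⊆ B := ball_subset_ball (le_of_lt hρr)
  obtain ⟨s, hsd, hssq, hsreal⟩ := exists_sqrt_pos hr hq hqne hqreal
  set w : ℂ → ℂ := fun z => s z * (z - (Fc : ℂ)) with hwdef
  have hwd : DifferentiableOn ℂ w B :=
    hsd.mul (differentiableOn_id.sub (differentiableOn_const _))
  have hwa : AnalyticOnNhd ℂ w B := hwd.analyticOnNhd hBo
  have hsFc_re : 0 < (s ((Fc : ℂ))).re := (hsreal Fc hFcB).2
  have hsFc_ne : s ((Fc : ℂ)) ≠ 0 := by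
    intro h0
    rw [h0] at hsFc_re
    simp at hsFc_re
  have hs_strict : HasStrictDerivAt s (fderiv ℂ s ((Fc : ℂ)) 1) ((Fc : ℂ)) :=
    ((hsd.analyticOnNhd hBo) ((Fc : ℂ)) hFcB).hasStrictFDerivAt.hasStrictDerivAt
  have hw_strict : HasStrictDerivAt w (s ((Fc : ℂ))) ((Fc : ℂ)) := by
    have h1 := hs_strict.mul
      ((hasStrictDerivAt_id ((Fc : ℂ))).sub (hasStrictDerivAt_const _ ((Fc : ℂ))))
    refine (show HasStrictDerivAt w _ (Fc : ℂ) from h1).congr_deriv ?_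
    simp
  set Φ := (hw_strict.hasStrictFDerivAt_equiv hsFc_ne).toOpenPartialHomeomorph w with hΦdef
  have hΦcoe : ⇑Φ = w := rfl
  have hFcsrc : ((Fc : ℂ)) ∈ Φ.source :=
    (hw_strict.hasStrictFDerivAt_equiv hsFc_ne).mem_toOpenPartialHomeomorph_source
  have hwFc : w ((Fc : ℂ)) = 0 := by simp [hwdef]
  have h0tgt : (0 : ℂ) ∈ Φ.target := by
    have h2 := (hw_strict.hasStrictFDerivAt_equiv hsFc_ne).image_mem_toOpenPartialHomeomorph_target
    rwa [hwFc] at h2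
  have hinj : Set.InjOn w Φ.source := hΦcoe ▸ Φ.injOn
  have hderivw_cont : ContinuousOn (deriv w) B := hwa.deriv.differentiableOn.continuousOn
  have hderivwFc : deriv w ((Fc : ℂ)) = s ((Fc : ℂ)) := hw_strict.hasDerivAt.deriv
  have hVo : IsOpen (B ∩ deriv w ⁻¹' {(0 : ℂ)}ᶜ) :=
    hderivw_cont.isOpen_inter_preimage hBo isOpen_compl_singleton
  have hWo : IsOpen (Φ.source ∩ (B ∩ deriv w ⁻¹' {(0 : ℂ)}ᶜ)) := Φ.open_source.inter hVo
  have hFcW : ((Fc : ℂ)) ∈ Φ.source ∩ (B ∩ deriv w ⁻¹' {(0 : ℂ)}ᶜ) :=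
    ⟨hFcsrc, hFcB, by simp [hderivwFc, hsFc_ne]⟩
  obtain ⟨ε₀, hε₀pos, hε₀sub⟩ := Metric.isOpen_iff.mp hWo _ hFcW
  set ε : ℝ := min ε₀ ρ / 2 with hεdef
  have hεpos : 0 < ε := by
    have := lt_min hε₀pos hρ
    positivity
  have hερ : ε < ρ := by
    have h3 : min ε₀ ρ ≤ ρ := min_le_right _ _
    rw [hεdef]; linarith
  have hεsub : Metric.ball ((Fc : ℂ)) ε ⊆ Φ.source ∩ (B ∩ deriv w ⁻¹' {(0 : ℂ)}ᶜ) := by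
    refine subset_trans (ball_subset_ball ?_) hε₀sub
    have h3 : min ε₀ ρ ≤ ε₀ := min_le_left _ _
    rw [hεdef]; linarith
  have hεballρ : Metric.ball ((Fc : ℂ)) ε ⊆ Metric.ball ((Fc : ℂ)) ρ :=
    ball_subset_ball (le_of_lt hερ)
  have hεB : Metric.ball ((Fc : ℂ)) ε ⊆ B := fun z hz => ((hεsub hz).2).1
  -- the minimum on the annulus
  set K := closedBall ((Fc : ℂ)) ρ \ Metric.ball ((Fc : ℂ)) ε with hKdef
  have hKc : IsCompact K := (isCompact_closedBall _ _).diff isOpen_ball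
  have hKB : K ⊆ B := fun z hz => closedBall_subset_ball hρr hz.1
  have hKne : K.Nonempty := by
    refine ⟨((Fc + ρ : ℝ) : ℂ), ?_, ?_⟩
    · rw [mem_closedBall, Complex.dist_eq]
      have he : ((Fc + ρ : ℝ) : ℂ) - (Fc : ℂ) = ((ρ : ℝ) : ℂ) := by push_cast; ring
      rw [he, Complex.norm_real, Real.norm_eq_abs, abs_of_pos hρ]
    · rw [mem_ball, Complex.dist_eq]
      have he : ((Fc + ρ : ℝ) : ℂ) - (Fc : ℂ) = ((ρ : ℝ) : ℂ) := by push_cast; ring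
      rw [he, Complex.norm_real, Real.norm_eq_abs, abs_of_pos hρ]
      push_neg
      linarith
  set G : ℂ → ℝ := fun z => ‖q z * (z - (Fc : ℂ)) ^ 2‖ with hGdef
  have hGc : ContinuousOn G K :=
    ((hq.continuousOn.mono hKB).mul
      (((continuous_id.sub continuous_const).pow 2).continuousOn)).norm
  obtain ⟨zm, hzmK, hzmmin⟩ := hKc.exists_isMinOn hKne hGc
  set m : ℝ := G zm with hmdef
  have hm : 0 < m := by
    rw [hmdef, hGdef]
    simp only [norm_pos_iff]
    refine mul_ne_zero (hqne zm (hKB hzmK)) (pow_ne_zero 2 ?_)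
    intro h4
    have h5 : zm = (Fc : ℂ) := by
      have := sub_eq_zero.mp h4; exact this
    have h6 := hzmK.2
    rw [h5] at h6
    exact h6 (mem_ball_self hεpos)
  -- IVT endpoints
  set x₂ : ℝ := Fc + ε / 2 with hx₂def
  set x₁ : ℝ := Fc - ε / 2 with hx₁def
  have hmemball : ∀ x : ℝ, |x - Fc| < ε → ((x : ℂ)) ∈ Metric.ball ((Fc : ℂ)) ε := by
    intro x hx
    rw [mem_ball, Complex.dist_eq]
    have he : ((x : ℝ) : ℂ) - (Fc : ℂ) = ((x - Fc : ℝ) : ℂ) := by push_cast; ring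
    rw [he, Complex.norm_real, Real.norm_eq_abs]
    exact hx
  have hx₂ε : ((x₂ : ℝ) : ℂ) ∈ Metric.ball ((Fc : ℂ)) ε := by
    refine hmemball x₂ ?_
    rw [hx₂def]; rw [show Fc + ε/2 - Fc = ε/2 by ring, abs_of_pos (by positivity)]; linarith
  have hx₁ε : ((x₁ : ℝ) : ℂ) ∈ Metric.ball ((Fc : ℂ)) ε := by
    refine hmemball x₁ ?_
    rw [hx₁def]; rw [show Fc - ε/2 - Fc = -(ε/2) by ring, abs_neg, abs_of_pos (by positivity)]
    linarith
  set A : ℝ := min ((s ((x₂ : ℂ))).re * (ε / 2)) ((s ((x₁ : ℂ))).re * (ε / 2)) with hAdef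
  have hA : 0 < A := by
    refine lt_min (mul_pos (hsreal x₂ (hεB hx₂ε)).2 (by positivity))
      (mul_pos (hsreal x₁ (hεB hx₁ε)).2 (by positivity))
  -- δ for the target
  have hsymmFc : Φ.symm 0 = ((Fc : ℂ)) := by
    rw [← hwFc]
    exact Φ.left_inv hFcsrc
  have hsymc : ContinuousAt Φ.symm 0 := Φ.continuousAt_symm h0tgt
  have h1nb : Φ.target ∈ nhds (0 : ℂ) := Φ.open_target.mem_nhds h0tgt
  have h2nb : Φ.symm ⁻¹' (Metric.ball ((Fc : ℂ)) ε) ∈ nhds (0 : ℂ) := by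
    refine hsymc.preimage_mem_nhds (isOpen_ball.mem_nhds ?_)
    rw [hsymmFc]
    exact mem_ball_self hεpos
  obtain ⟨δ, hδpos, hδsub⟩ := Metric.mem_nhds_iff.mp (Filter.inter_mem h1nb h2nb)
  -- the threshold
  refine ⟨min (min (m / 2) (A ^ 2)) ((δ / 2) ^ 2), by positivity, s, hsd, hssq, hsreal, ?_⟩
  intro c hc
  set c₀ : ℝ := min (min (m / 2) (A ^ 2)) ((δ / 2) ^ 2) with hc₀def
  have hcm : |c| < m := by
    have h3 : c₀ ≤ m / 2 := le_trans (min_le_left _ _) (min_le_left _ _)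
    calc |c| ≤ c₀ := hc
      _ ≤ m / 2 := h3
      _ < m := by linarith
  have hcA : |c| ≤ A ^ 2 := le_trans hc (le_trans (min_le_left _ _) (min_le_right _ _))
  have hcδ : |c| ≤ (δ / 2) ^ 2 := le_trans hc (min_le_right _ _)
  -- basic zero equivalences
  have hg_eqw : ∀ z ∈ B, (c : ℂ) + q z * (z - (Fc : ℂ)) ^ 2 = (c : ℂ) + (w z) ^ 2 := by
    intro z hz
    rw [hwdef]
    simp only []
    rw [mul_pow, hssq z hz]
  have hzero_iff : ∀ z ∈ B, ((c : ℂ) + q z * (z - (Fc : ℂ)) ^ 2 = 0 ↔ (w z) ^ 2 = -(c : ℂ)) := by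
    intro z hz
    rw [hg_eqw z hz]
    constructor
    · intro h4; linear_combination h4
    · intro h4; linear_combination h4
  have hzero_ball : ∀ z ∈ Metric.ball ((Fc : ℂ)) ρ,
      (c : ℂ) + q z * (z - (Fc : ℂ)) ^ 2 = 0 → z ∈ Metric.ball ((Fc : ℂ)) ε := by
    intro z hzρ hz0
    by_contra hno
    have hzK : z ∈ K := ⟨ball_subset_closedBall hzρ, hno⟩
    have h3 : m ≤ G z := hzmmin hzK
    have h4 : q z * (z - (Fc : ℂ)) ^ 2 = -((c : ℝ) : ℂ) := by linear_combination hz0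
    have h5 : G z = |c| := by
      rw [hGdef]
      simp only []
      rw [h4, norm_neg, Complex.norm_real, Real.norm_eq_abs]
    rw [h5] at h3
    linarith
  -- derivative formula
  have hgderiv : ∀ z ∈ B, deriv (fun z => (c : ℂ) + q z * (z - (Fc : ℂ)) ^ 2) z
      = 2 * w z * deriv w z := by
    intro z hz
    have hEq : (fun z => (c : ℂ) + q z * (z - (Fc : ℂ)) ^ 2) =ᶠ[nhds z]
        (fun z => (c : ℂ) + (w z) ^ 2) :=
      Filter.eventuallyEq_of_mem (hBo.mem_nhds hz) (fun u hu => hg_eqw u hu)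
    rw [hEq.deriv_eq]
    have hwz : HasDerivAt w (deriv w z) z := (hwd.differentiableAt (hBo.mem_nhds hz)).hasDerivAt
    have h6 := ((hwz.pow 2).const_add ((c : ℝ) : ℂ))
    rw [show deriv (fun z => (c : ℂ) + (w z) ^ 2) z = _ from h6.deriv]
    norm_num
  have hwne_deriv : ∀ z ∈ Metric.ball ((Fc : ℂ)) ε, w z ≠ 0 →
      deriv (fun z => (c : ℂ) + q z * (z - (Fc : ℂ)) ^ 2) z ≠ 0 := by
    intro z hzε hwne
    have hzV := (hεsub hzε).2
    rw [hgderiv z hzV.1]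
    refine mul_ne_zero (mul_ne_zero two_ne_zero hwne) ?_
    simpa using hzV.2
  -- reality of w on the reals
  set u : ℝ → ℝ := fun x => (s ((x : ℂ))).re * (x - Fc) with hudef
  have hwreal : ∀ x : ℝ, ((x : ℂ)) ∈ B → w ((x : ℂ)) = ((u x : ℝ) : ℂ) := by
    intro x hx
    have h6 : s ((x : ℂ)) = (((s ((x : ℂ))).re : ℝ) : ℂ) := by
      apply Complex.ext
      · simp
      · simp [(hsreal x hx).1]
    rw [hwdef]
    simp only []
    rw [h6, hudef]
    push_cast
    ring
  refine ⟨?_, ?_, ?_⟩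
  · -- c < 0
    intro hcneg
    set α : ℝ := Real.sqrt (-c) with hαdef
    have hαpos : 0 < α := Real.sqrt_pos.mpr (by linarith)
    have hαsq : α ^ 2 = -c := Real.sq_sqrt (by linarith)
    have hα2 : ((α : ℝ) : ℂ) ^ 2 = -((c : ℝ) : ℂ) := by
      rw [show ((α : ℝ) : ℂ) ^ 2 = ((α ^ 2 : ℝ) : ℂ) by push_cast; ring, hαsq]
      push_cast; ring
    have hαA : α ≤ A := by
      have h7 : α ^ 2 ≤ A ^ 2 := by rw [hαsq, show -c = |c| by rw [abs_of_neg hcneg]]; exact hcA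
      nlinarith
    -- continuity of u
    have hucont : ∀ p p' : ℝ, (∀ x ∈ Set.uIcc p p', ((x : ℂ)) ∈ B) →
        ContinuousOn u (Set.uIcc p p') := by
      intro p p' hsub
      refine (Complex.continuous_re.comp_continuousOn
        ((hsd.continuousOn).comp Complex.continuous_ofReal.continuousOn hsub)).mul
        ((continuous_id.sub continuous_const).continuousOn)
    have hx₂B : ((x₂ : ℂ)) ∈ B := hεB hx₂ε
    have hx₁B : ((x₁ : ℂ)) ∈ B := hεB hx₁ε
    have hsubIcc₂ : ∀ x ∈ Set.uIcc Fc x₂, ((x : ℂ)) ∈ Metric.ball ((Fc : ℂ)) ε := by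
      intro x hx
      refine hmemball x ?_
      have h8 := uIcc_abs_le hx
      have habs : |x₂ - Fc| = ε / 2 := by
        rw [hx₂def, show Fc + ε/2 - Fc = ε/2 by ring]
        exact abs_of_pos (by positivity)
      rw [habs] at h8
      linarith
    have hsubIcc₁ : ∀ x ∈ Set.uIcc Fc x₁, ((x : ℂ)) ∈ Metric.ball ((Fc : ℂ)) ε := by
      intro x hx
      refine hmemball x ?_
      have h8 := uIcc_abs_le hx
      have habs : |x₁ - Fc| = ε / 2 := by
        rw [hx₁def, show Fc - ε/2 - Fc = -(ε/2) by ring, abs_neg]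
        exact abs_of_pos (by positivity)
      rw [habs] at h8
      linarith
    have huFc : u Fc = 0 := by rw [hudef]; simp
    have hux₂ : A ≤ u x₂ := by
      rw [hudef]
      simp only []
      rw [hx₂def, show Fc + ε/2 - Fc = ε/2 by ring]
      exact le_trans (min_le_left _ _) (le_refl _)
    have hux₁ : u x₁ ≤ -A := by
      rw [hudef]
      simp only []
      rw [hx₁def, show Fc - ε/2 - Fc = -(ε/2) by ring]
      have h9 : A ≤ (s ((x₁ : ℂ))).re * (ε/2) := min_le_right _ _
      nlinarith
    -- find F₂
    have hivt₂ := intermediate_value_uIcc (hucont Fc x₂ (fun x hx => hεB (hsubIcc₂ x hx)))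
    have hmem₂ : α ∈ Set.uIcc (u Fc) (u x₂) := by
      rw [Set.mem_uIcc]
      left
      exact ⟨by rw [huFc]; exact le_of_lt hαpos, le_trans hαA (by linarith [hux₂])⟩
    obtain ⟨F₂, hF₂mem, hF₂val⟩ := hivt₂ hmem₂
    have hivt₁ := intermediate_value_uIcc (hucont Fc x₁ (fun x hx => hεB (hsubIcc₁ x hx)))
    have hmem₁ : -α ∈ Set.uIcc (u Fc) (u x₁) := by
      rw [Set.mem_uIcc]
      right
      exact ⟨le_trans (by linarith [hux₁]) (by linarith [hαA] : -A ≤ -α), by rw [huFc]; linarith⟩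
    obtain ⟨F₁, hF₁mem, hF₁val⟩ := hivt₁ hmem₁
    have hF₂ε : ((F₂ : ℂ)) ∈ Metric.ball ((Fc : ℂ)) ε := hsubIcc₂ F₂ hF₂mem
    have hF₁ε : ((F₁ : ℂ)) ∈ Metric.ball ((Fc : ℂ)) ε := hsubIcc₁ F₁ hF₁mem
    have hwF₂ : w ((F₂ : ℂ)) = ((α : ℝ) : ℂ) := by rw [hwreal F₂ (hεB hF₂ε), hF₂val]
    have hwF₁ : w ((F₁ : ℂ)) = -((α : ℝ) : ℂ) := by
      rw [hwreal F₁ (hεB hF₁ε), hF₁val]; push_cast; ring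
    have hF₂gt : Fc < F₂ := by
      rcases Set.mem_uIcc.mp hF₂mem with ⟨h10, h11⟩ | ⟨h10, h11⟩
      · rcases lt_or_eq_of_le h10 with h12 | h12
        · exact h12
        · exfalso; rw [← h12, huFc] at hF₂val; linarith
      · exfalso
        have : x₂ ≤ Fc := le_trans h10 h11
        rw [hx₂def] at this; linarith
    have hF₁lt : F₁ < Fc := by
      rcases Set.mem_uIcc.mp hF₁mem with ⟨h10, h11⟩ | ⟨h10, h11⟩
      · exfalso
        have : Fc ≤ x₁ := le_trans h10 h11
        rw [hx₁def] at this; linarith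
      · rcases lt_or_eq_of_le h11 with h12 | h12
        · exact h12
        · exfalso; rw [h12, huFc] at hF₁val; linarith
    -- the iff
    have hiff : ∀ z ∈ Metric.ball ((Fc : ℂ)) ρ,
        ((c : ℂ) + q z * (z - (Fc : ℂ)) ^ 2 = 0 ↔ z = ((F₁ : ℂ)) ∨ z = ((F₂ : ℂ))) := by
      intro z hzρ
      constructor
      · intro hz0
        have hzε := hzero_ball z hzρ hz0
        have hzsrc : z ∈ Φ.source := (hεsub hzε).1
        have hw2 := (hzero_iff z (hρB hzρ)).mp hz0
        rw [← hα2] at hw2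
        rcases sq_eq_sq_iff_eq_or_eq_neg.mp hw2 with h12 | h12
        · right
          exact hinj hzsrc (hεsub hF₂ε).1 (by rw [h12, hwF₂])
        · left
          exact hinj hzsrc (hεsub hF₁ε).1 (by rw [h12, hwF₁])
      · rintro (rfl | rfl)
        · refine (hzero_iff _ (hρB hzρ)).mpr ?_
          rw [hwF₁, ← hα2]; ring
        · refine (hzero_iff _ (hρB hzρ)).mpr ?_
          rw [hwF₂, ← hα2]
    have hαne : ((α : ℝ) : ℂ) ≠ 0 := by
      simpa using ne_of_gt hαpos
    refine ⟨F₁, F₂, hF₁lt, hF₂gt, hεballρ hF₁ε, hεballρ hF₂ε, hiff, ?_, ?_, ?_⟩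
    · exact hwne_deriv _ hF₁ε (by rw [hwF₁]; simpa using hαne)
    · exact hwne_deriv _ hF₂ε (by rw [hwF₂]; exact hαne)
    · intro z hzρ hz0
      rcases (hiff z hzρ).mp hz0 with rfl | rfl
      · right
        exact hwF₁
      · left
        exact hwF₂
  · -- c = 0
    intro hc0
    subst hc0
    have hiff : ∀ z ∈ Metric.ball ((Fc : ℂ)) ρ,
        (((0 : ℝ) : ℂ) + q z * (z - (Fc : ℂ)) ^ 2 = 0 ↔ z = ((Fc : ℂ))) := by
      intro z hzρ
      rw [Complex.ofReal_zero, zero_add]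
      constructor
      · intro h12
        rcases mul_eq_zero.mp h12 with h13 | h13
        · exact absurd h13 (hqne z (hρB hzρ))
        · have := pow_eq_zero_iff (n := 2) (by norm_num) |>.mp h13
          exact sub_eq_zero.mp this
      · rintro rfl
        simp
    refine ⟨hiff, ?_, ?_⟩
    · rw [hgderiv _ hFcB, hwFc]
      ring
    · -- second derivative
      have hEq : (fun z => ((0 : ℝ) : ℂ) + q z * (z - (Fc : ℂ)) ^ 2) =ᶠ[nhds ((Fc : ℂ))]
          (fun z => ((0 : ℝ) : ℂ) + (w z) ^ 2) :=
        Filter.eventuallyEq_of_mem (hBo.mem_nhds hFcB) (fun z hz => hg_eqw z hz)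
      rw [(hEq.deriv).deriv_eq]
      have hEq2 : deriv (fun z => ((0 : ℝ) : ℂ) + (w z) ^ 2) =ᶠ[nhds ((Fc : ℂ))]
          (fun z => 2 * (w z * deriv w z)) := by
        refine Filter.eventuallyEq_of_mem (hBo.mem_nhds hFcB) (fun z hz => ?_)
        have hwz : HasDerivAt w (deriv w z) z :=
          (hwd.differentiableAt (hBo.mem_nhds hz)).hasDerivAt
        rw [show deriv (fun z => ((0 : ℝ) : ℂ) + (w z) ^ 2) z = _ from ((hwz.pow 2).const_add ((0 : ℝ) : ℂ)).deriv]
        norm_num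
        ring
      rw [hEq2.deriv_eq]
      have hA1 : HasDerivAt w (deriv w ((Fc : ℂ))) ((Fc : ℂ)) :=
        (hwd.differentiableAt (hBo.mem_nhds hFcB)).hasDerivAt
      have hB1 : HasDerivAt (deriv w) (deriv (deriv w) ((Fc : ℂ))) ((Fc : ℂ)) :=
        ((hwa.deriv ((Fc : ℂ)) hFcB).differentiableAt).hasDerivAt
      have hAB := (hA1.mul hB1).const_mul (2 : ℂ)
      rw [show deriv (fun z => 2 * (w z * deriv w z)) (Fc : ℂ) = _ from hAB.deriv]
      rw [hwFc, hderivwFc]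
      simp only [mul_zero, zero_mul, add_zero]
      exact mul_ne_zero two_ne_zero (mul_ne_zero hsFc_ne hsFc_ne)
  · -- c > 0
    intro hcpos
    set β : ℝ := Real.sqrt c with hβdef
    have hβpos : 0 < β := Real.sqrt_pos.mpr hcpos
    have hβsq : β ^ 2 = c := Real.sq_sqrt (le_of_lt hcpos)
    set α : ℂ := Complex.I * ((β : ℝ) : ℂ) with hαdef
    have hα2 : α ^ 2 = -((c : ℝ) : ℂ) := by
      rw [hαdef, mul_pow, Complex.I_sq,
        show ((β : ℝ) : ℂ) ^ 2 = ((β ^ 2 : ℝ) : ℂ) by push_cast; ring, hβsq]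
      ring
    have hαne : α ≠ 0 := by
      rw [hαdef]
      exact mul_ne_zero Complex.I_ne_zero (by simpa using ne_of_gt hβpos)
    have hαball : α ∈ Metric.ball (0 : ℂ) δ := by
      rw [mem_ball, Complex.dist_eq, sub_zero, hαdef]
      rw [norm_mul, Complex.norm_I, one_mul, Complex.norm_real, Real.norm_eq_abs, abs_of_pos hβpos]
      have h13 : c ≤ (δ / 2) ^ 2 := by rwa [abs_of_pos hcpos] at hcδ
      have h14 : β ≤ δ / 2 := by
        rw [hβdef]
        calc Real.sqrt c ≤ Real.sqrt ((δ / 2) ^ 2) := Real.sqrt_le_sqrt h13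
          _ = δ / 2 := Real.sqrt_sq (by positivity)
      linarith
    have hαtgt : α ∈ Φ.target := (hδsub hαball).1
    have hαpre : Φ.symm α ∈ Metric.ball ((Fc : ℂ)) ε := (hδsub hαball).2
    set z₀ : ℂ := Φ.symm α with hz₀def
    have hz₀src : z₀ ∈ Φ.source := Φ.map_target hαtgt
    have hwz₀ : w z₀ = α := Φ.right_inv hαtgt
    have hz₀B : z₀ ∈ B := hεB hαpre
    have hz₀im : z₀.im ≠ 0 := by
      intro him0
      have h15 : z₀ = ((z₀.re : ℝ) : ℂ) := by
        apply Complex.ext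
        · simp
        · simp [him0]
      have h16 := hwreal z₀.re (h15 ▸ hz₀B)
      rw [← h15] at h16
      rw [h16] at hwz₀
      have h17 : ((u z₀.re : ℝ) : ℂ).im = 0 := by simp
      rw [hwz₀] at h17
      rw [hαdef] at h17
      simp at h17
      exact absurd h17 (ne_of_gt hβpos)
    -- the conjugate
    have hrefl := reflection_eq hr hq (fun x hx => (hqreal x hx).1)
    have hz₁ε : (starRingEnd ℂ) z₀ ∈ Metric.ball ((Fc : ℂ)) ε := by
      rw [mem_ball, Complex.dist_eq] at hαpre ⊢
      have he : (starRingEnd ℂ) z₀ - (Fc : ℂ) = (starRingEnd ℂ) (z₀ - (Fc : ℂ)) := by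
        rw [map_sub, Complex.conj_ofReal]
      rw [he, Complex.norm_conj]
      exact hαpre
    have hz₁src : (starRingEnd ℂ) z₀ ∈ Φ.source := (hεsub hz₁ε).1
    have hz₁B : (starRingEnd ℂ) z₀ ∈ B := hεB hz₁ε
    have hgz₀ : (c : ℂ) + q z₀ * (z₀ - (Fc : ℂ)) ^ 2 = 0 := by
      refine (hzero_iff z₀ hz₀B).mpr ?_
      rw [hwz₀, hα2]
    have hgz₁ : (c : ℂ) + q ((starRingEnd ℂ) z₀) * ((starRingEnd ℂ) z₀ - (Fc : ℂ)) ^ 2 = 0 := by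
      have h18 : (c : ℂ) + q ((starRingEnd ℂ) z₀) * ((starRingEnd ℂ) z₀ - (Fc : ℂ)) ^ 2
          = (starRingEnd ℂ) ((c : ℂ) + q z₀ * (z₀ - (Fc : ℂ)) ^ 2) := by
        rw [hrefl z₀ hz₀B]
        rw [map_add, map_mul, map_pow, map_sub, Complex.conj_ofReal, Complex.conj_ofReal]
      rw [h18, hgz₀, map_zero]
    have hwz₁ : w ((starRingEnd ℂ) z₀) = -α := by
      have h19 := (hzero_iff _ hz₁B).mp hgz₁
      rw [← hα2] at h19
      rcases sq_eq_sq_iff_eq_or_eq_neg.mp h19 with h20 | h20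
      · exfalso
        have h21 : (starRingEnd ℂ) z₀ = z₀ :=
          hinj hz₁src hz₀src (by rw [h20, hwz₀])
        exact hz₀im (Complex.conj_eq_iff_im.mp h21)
      · exact h20
    have hiff : ∀ z ∈ Metric.ball ((Fc : ℂ)) ρ,
        ((c : ℂ) + q z * (z - (Fc : ℂ)) ^ 2 = 0 ↔ z = z₀ ∨ z = (starRingEnd ℂ) z₀) := by
      intro z hzρ
      constructor
      · intro hz0
        have hzε := hzero_ball z hzρ hz0
        have hzsrc : z ∈ Φ.source := (hεsub hzε).1
        have hw2 := (hzero_iff z (hρB hzρ)).mp hz0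
        rw [← hα2] at hw2
        rcases sq_eq_sq_iff_eq_or_eq_neg.mp hw2 with h22 | h22
        · left
          exact hinj hzsrc hz₀src (by rw [h22, hwz₀])
        · right
          exact hinj hzsrc hz₁src (by rw [h22, hwz₁])
      · rintro (rfl | rfl)
        · exact hgz₀
        · exact hgz₁
    refine ⟨z₀, hεballρ hαpre, hz₀im, hiff, ?_, ?_, ?_⟩
    · exact hwne_deriv _ hαpre (by rw [hwz₀]; exact hαne)
    · exact hwne_deriv _ hz₁ε (by rw [hwz₁]; simpa using hαne)
    · intro z hzρ hz0
      rcases (hiff z hzρ).mp hz0 with rfl | rfl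
      · left
        exact hwz₀
      · right
        exact hwz₁
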